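/- A finite directed acyclic graph D contains a directed Hamiltonian path if and only if for every two distinct vertices u and v of D, there is a directed path from u to v or a directed path from v to u. -/

import Mathlib

universe u

open Relation

private lemma restrict_rtg {V : Type*} (r : V → V → Prop) (m : V)
    (hmin : ∀ x, ¬ TransGen r x m) {u v : V} (h : ReflTransGen r u v)
    (hv : v ≠ m) :
    ∀ hu : u ≠ m,
      ReflTransGen (fun a b : {x : V // x ≠ m} => r a.val b.val) ⟨u, hu⟩ ⟨v, hv⟩ := by
  induction h using ReflTransGen.head_induction_on with
  | refl => intro hu; exact ReflTransGen.refl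
  | head hab hbv ih =>
      rename_i a b
      intro ha
      have hb : b ≠ m := fun hbm => hmin a (hbm ▸ TransGen.single hab)
      exact ReflTransGen.head (show r a b from hab) (ih hb)

private lemma ham_aux : ∀ (n : ℕ) (V : Type u) [Fintype V] (r : V → V → Prop),
    Fintype.card V = n → (∀ v, ¬ TransGen r v v) →
    (∀ u v : V, u ≠ v → ReflTransGen r u v ∨ ReflTransGen r v u) →
    ∃ l : List V, l.Nodup ∧ (∀ v : V, v ∈ l) ∧ l.Chain' r := by
  intro n
  induction n with
  | zero =>
      intro V _ r hcard _ _
      haveI : IsEmpty V := Fintype.card_eq_zero_iff.mp hcard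
      exact ⟨[], List.nodup_nil, fun v => (IsEmpty.false v).elim, List.isChain_nil⟩
  | succ n ih =>
      intro V _ r hcard hacyc htot
      classical
      haveI : IsTrans V (TransGen r) := ⟨fun _ _ _ => TransGen.trans⟩
      haveI : IsIrrefl V (TransGen r) := ⟨hacyc⟩
      have hwf : WellFounded (TransGen r) := Finite.wellFounded_of_trans_of_irrefl _
      have hne : Nonempty V := Fintype.card_pos_iff.mp (by omega)
      obtain ⟨v0⟩ := hne
      obtain ⟨m, -, hmin'⟩ := hwf.has_min Set.univ ⟨v0, trivial⟩
      have hmin : ∀ x, ¬ TransGen r x m := fun x hx => hmin' x trivial hx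
      have hreach : ∀ v : V, v ≠ m → ReflTransGen r m v := by
        intro v hv
        rcases htot m v (Ne.symm hv) with h | h
        · exact h
        · exact absurd ((Relation.reflTransGen_iff_eq_or_transGen.mp h).resolve_left
            (fun e => hv e.symm)) (hmin v)
      set V' := {x : V // x ≠ m} with hV'
      set r' : V' → V' → Prop := fun a b => r a.val b.val with hr'
      have hcard' : Fintype.card V' = n := by
        have : Fintype.card V' = Fintype.card V - 1 := by
          simp [hV', Fintype.card_subtype_compl, Fintype.card_subtype_eq]
        omega
      have hacyc' : ∀ v : V', ¬ TransGen r' v v := by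
        intro v hv
        exact hacyc v.val (TransGen.lift Subtype.val (fun a b h => h) _ _ hv)
      have htot' : ∀ u v : V', u ≠ v → ReflTransGen r' u v ∨ ReflTransGen r' v u := by
        intro u v huv
        have huv' : u.val ≠ v.val := fun h => huv (Subtype.ext h)
        rcases htot u.val v.val huv' with h | h
        · left
          have := restrict_rtg r m hmin h v.property u.property
          simpa using this
        · right
          have := restrict_rtg r m hmin h u.property v.property
          simpa using this
      obtain ⟨l', hnd', hmem', hch'⟩ := ih V' r' hcard' hacyc' htot'
      cases l' with
      | nil =>
          refine ⟨[m], List.nodup_singleton m, fun v => ?_, List.isChain_singleton m⟩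
          by_contra hv
          have : v ≠ m := by simpa using hv
          exact absurd (hmem' ⟨v, this⟩) List.not_mem_nil
      | cons h' t' =>
          -- head reaches everything in t' via TransGen r'
          haveI : IsTrans V' (TransGen r') := ⟨fun _ _ _ => TransGen.trans⟩
          have hpw : (h' :: t').Pairwise (TransGen r') := by
            rw [← List.isChain_iff_pairwise]
            exact hch'.imp (fun a b h => TransGen.single h)
          have hheadall : ∀ x ∈ t', TransGen r' h' x :=
            fun x hx => (List.pairwise_cons.mp hpw).1 x hx
          -- single edge from m to h'.val
          have hedge : r m h'.val := by
            have hmh : ReflTransGen r m h'.val := hreach h'.val h'.property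
            rcases hmh.cases_head with heq | ⟨c, hmc, hch⟩
            · exact absurd heq.symm h'.property
            have hc : c ≠ m := fun e => hacyc m (TransGen.single (e ▸ hmc))
            by_cases hcv : c = h'.val
            · exact hcv ▸ hmc
            · exfalso
              have h1 : ReflTransGen r' ⟨c, hc⟩ h' := by
                have := restrict_rtg r m hmin hch h'.property hc
                simpa using this
              have h2 : TransGen r' ⟨c, hc⟩ h' := by
                rcases Relation.reflTransGen_iff_eq_or_transGen.mp h1 with he | ht
                · exact absurd (congrArg Subtype.val he.symm) hcv
                · exact ht
              have hcmem : (⟨c, hc⟩ : V') ∈ h' :: t' := hmem' _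
              have hct' : (⟨c, hc⟩ : V') ∈ t' := by
                rcases List.mem_cons.mp hcmem with he | ht
                · exact absurd (congrArg Subtype.val he) hcv
                · exact ht
              have : TransGen r' h' h' := (hheadall _ hct').trans h2
              exact hacyc' h' this
          refine ⟨m :: (h' :: t').map (Subtype.val : V' → V), ?_, ?_, ?_⟩
          · refine List.nodup_cons.mpr ⟨?_, hnd'.map Subtype.val_injective⟩
            intro hm
            obtain ⟨x, -, hx⟩ := List.mem_map.mp hm
            exact x.property hx
          · intro w
            by_cases hw : w = m
            · subst hw; exact List.mem_cons_self
            · exact List.mem_cons_of_mem _ (List.mem_map.mpr ⟨⟨w, hw⟩, hmem' _, rfl⟩)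
          · simp only [List.Chain', List.isChain_cons]
            constructor
            · intro y hy
              have : h'.val = y := by simpa using hy
              exact this ▸ hedge
            · exact List.isChain_map_of_isChain Subtype.val (fun a b h => h) hch'

/-- A finite DAG contains a directed Hamiltonian path iff any two distinct vertices
are comparable under reachability. -/
theorem dag_hamiltonian_iff_total_reachability {V : Type*} [Fintype V]
    (r : V → V → Prop) (hacyc : ∀ v : V, ¬ Relation.TransGen r v v) :
    (∃ l : List V, l.Nodup ∧ (∀ v : V, v ∈ l) ∧ l.Chain' r) ↔
      ∀ u v : V, u ≠ v →
        Relation.ReflTransGen r u v ∨ Relation.ReflTransGen r v u := by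
  constructor
  · rintro ⟨l, hnd, hmem, hch⟩ u v huv
    haveI : IsTrans V (ReflTransGen r) := ⟨fun _ _ _ => ReflTransGen.trans⟩
    have hpw : l.Pairwise (ReflTransGen r) := by
      rw [← List.isChain_iff_pairwise]
      exact hch.imp (fun a b h => ReflTransGen.single h)
    have hpw' : l.Pairwise (fun a b => ReflTransGen r a b ∨ ReflTransGen r b a) :=
      hpw.imp Or.inl
    haveI : Std.Symm (fun a b => ReflTransGen r a b ∨ ReflTransGen r b a) := ⟨fun a b h => h.symm⟩
    exact hpw'.forall (hmem u) (hmem v) huv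
  · intro htot
    exact ham_aux (Fintype.card V) V r rfl hacyc htot
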